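/- Let (x_k) be generated by FRB under the descent hypotheses, and suppose the sequence z_k = (x_{k+1}, x_k) is bounded with a subsequence z_{k_l} → z* = (x*, y*). Then x* = y*, H(z_k) → f(x*) + g(x*), and 0 ∈ ∂f(x*) + ∇g(x*), i.e., x* is a stationary point of F = f + g. -/

import Mathlib

open Filter Topology

variable {H : Type*} [NormedAddCommGroup H] [InnerProductSpace ℝ H]

/-- `v` is a Fréchet subgradient of `f` at `x`. -/
def FSubd (f : H → EReal) (x v : H) : Prop :=
  f x ≠ ⊤ ∧ ∀ ε : ℝ, 0 < ε → ∃ δ : ℝ, 0 < δ ∧ ∀ y : H, ‖y - x‖ < δ →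
    f x + (((inner ℝ v (y - x) : ℝ) - ε * ‖y - x‖ : ℝ) : EReal) ≤ f y

/-- `v` is a limiting (Mordukhovich) subgradient of `f` at `x`. -/
def LSubd (f : H → EReal) (x v : H) : Prop :=
  ∃ xs vs : ℕ → H,
    Tendsto xs atTop (nhds x) ∧
    Tendsto (fun k => f (xs k)) atTop (nhds (f x)) ∧
    (∀ k, FSubd f (xs k) (vs k)) ∧
    Tendsto vs atTop (nhds v)

/-- `f` is proper: never `⊥` and finite somewhere. -/
def ProperFn (f : H → EReal) : Prop :=
  (∀ x, f x ≠ ⊥) ∧ ∃ x, f x ≠ ⊤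

/-- The proximal mapping: set of minimizers of `u ↦ f u + (1/(2λ))‖x - u‖²`. -/
def Prox (lam : ℝ) (f : H → EReal) (x : H) : Set H :=
  {y | ∀ u : H, f y + ((1 / (2 * lam) * ‖x - y‖ ^ 2 : ℝ) : EReal)
      ≤ f u + ((1 / (2 * lam) * ‖x - u‖ ^ 2 : ℝ) : EReal)}

/-- `f` is prox-bounded with threshold (at least) `lf`. -/
def ProxBddWith (f : H → EReal) (lf : ℝ) : Prop :=
  ∀ lam : ℝ, 0 < lam → lam < lf →
    ∃ b : ℝ, ∀ y : H, (b : EReal) ≤ f y + ((1 / (2 * lam) * ‖y‖ ^ 2 : ℝ) : EReal)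


lemma descent_aux {E : Type*} [NormedAddCommGroup E] [InnerProductSpace ℝ E] [CompleteSpace E]
    (g : E → ℝ) (g' : E → E) (hdiff : ∀ x, HasGradientAt g (g' x) x)
    (L : ℝ) (hL : 0 ≤ L) (hlip : ∀ x y, ‖g' x - g' y‖ ≤ L * ‖x - y‖) (a b : E) :
    g b ≤ g a + (inner ℝ (g' a) (b - a) : ℝ) + L / 2 * ‖b - a‖ ^ 2 := by
  set v := b - a with hv
  set ψ : ℝ → ℝ := fun t => g (a + t • v) - t * (inner ℝ (g' a) v : ℝ) - L / 2 * t ^ 2 * ‖v‖ ^ 2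
    with hψ
  have hline : ∀ t : ℝ, HasDerivAt (fun t : ℝ => a + t • v) v t := fun t => by
    simpa using ((hasDerivAt_id t).smul_const v).const_add a
  have hgd : ∀ t : ℝ, HasDerivAt (fun t : ℝ => g (a + t • v))
      ((inner ℝ (g' (a + t • v)) v : ℝ)) t := by
    intro t
    have h1 := (hdiff (a + t • v)).hasFDerivAt
    have := h1.comp_hasDerivAt t (hline t)
    exact this
  have hψd : ∀ t : ℝ, HasDerivAt ψ
      ((inner ℝ (g' (a + t • v)) v : ℝ) - (inner ℝ (g' a) v : ℝ) - L * t * ‖v‖ ^ 2) t := by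
    intro t
    have h2 : HasDerivAt (fun t : ℝ => t * (inner ℝ (g' a) v : ℝ)) (inner ℝ (g' a) v : ℝ) t := by
      simpa using (hasDerivAt_id t).mul_const (inner ℝ (g' a) v : ℝ)
    have h3 : HasDerivAt (fun t : ℝ => L / 2 * t ^ 2 * ‖v‖ ^ 2) (L * t * ‖v‖ ^ 2) t := by
      have h4 : HasDerivAt (fun t : ℝ => t ^ 2) (2 * t) t := by
        simpa using hasDerivAt_pow 2 t
      have := (h4.const_mul (L / 2)).mul_const (‖v‖ ^ 2)
      exact this.congr_deriv (by ring)
    exact ((hgd t).sub h2).sub h3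
  have hderiv_nonpos : ∀ t ∈ Set.Ioo (0:ℝ) 1, deriv ψ t ≤ 0 := by
    intro t ht
    rw [(hψd t).deriv]
    have h5 : (inner ℝ (g' (a + t • v)) v : ℝ) - (inner ℝ (g' a) v : ℝ)
        = (inner ℝ (g' (a + t • v) - g' a) v : ℝ) := by rw [inner_sub_left]
    have h6 : (inner ℝ (g' (a + t • v) - g' a) v : ℝ) ≤ ‖g' (a + t • v) - g' a‖ * ‖v‖ :=
      real_inner_le_norm _ _
    have h7 : ‖g' (a + t • v) - g' a‖ ≤ L * ‖t • v‖ := by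
      simpa using hlip (a + t • v) a
    have h8 : ‖t • v‖ = t * ‖v‖ := by
      rw [norm_smul, Real.norm_eq_abs, abs_of_pos ht.1]
    rw [h8] at h7
    have h9 := mul_le_mul_of_nonneg_right h7 (norm_nonneg v)
    nlinarith [norm_nonneg v]
  have hanti : AntitoneOn ψ (Set.Icc (0:ℝ) 1) := by
    apply antitoneOn_of_deriv_nonpos (convex_Icc 0 1)
    · exact Continuous.continuousOn (by
        have : Continuous ψ := by
          have : Differentiable ℝ ψ := fun t => (hψd t).differentiableAt
          exact this.continuous
        exact this)
    · intro t _
      exact (hψd t).differentiableAt.differentiableWithinAt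
    · intro t ht
      rw [interior_Icc] at ht
      exact hderiv_nonpos t ht
  have := hanti (Set.left_mem_Icc.2 zero_le_one) (Set.right_mem_Icc.2 zero_le_one) zero_le_one
  simp only [hψ] at this
  simp only [zero_smul, add_zero, one_smul, zero_mul, mul_zero, zero_pow, sub_zero,
    one_mul, one_pow, mul_one] at this
  have hab : a + v = b := by rw [hv]; abel
  rw [hab] at this
  linarith

lemma prox_ne_top (f : H → EReal) (hproper : ProperFn f) (lam : ℝ)
    (p xp : H) (hxp : xp ∈ Prox lam f p) : f xp ≠ ⊤ := by
  obtain ⟨hbot, u₀, hu₀⟩ := hproper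
  intro htop
  have h := hxp u₀
  rw [htop] at h
  have hl : (⊤ : EReal) + ((1 / (2 * lam) * ‖p - xp‖ ^ 2 : ℝ) : EReal) = ⊤ :=
    EReal.top_add_coe _
  rw [hl, top_le_iff] at h
  have : f u₀ = ((f u₀).toReal : EReal) := (EReal.coe_toReal hu₀ (hbot u₀)).symm
  rw [this, ← EReal.coe_add] at h
  exact EReal.coe_ne_top _ h

lemma prox_real_ineq (f : H → EReal) (hproper : ProperFn f) (lam : ℝ)
    (p xp : H) (hxp : xp ∈ Prox lam f p) (u : H) (hu : f u ≠ ⊤) :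
    (f xp).toReal + 1 / (2 * lam) * ‖p - xp‖ ^ 2
      ≤ (f u).toReal + 1 / (2 * lam) * ‖p - u‖ ^ 2 := by
  have h := hxp u
  rw [← EReal.coe_toReal (prox_ne_top f hproper lam p xp hxp) (hproper.1 xp),
    ← EReal.coe_toReal hu (hproper.1 u), ← EReal.coe_add, ← EReal.coe_add,
    EReal.coe_le_coe_iff] at h
  exact h

lemma prox_fsubd (f : H → EReal) (hproper : ProperFn f) (lam : ℝ) (hlam : 0 < lam)
    (p xp : H) (hxp : xp ∈ Prox lam f p) :
    FSubd f xp ((1 / lam) • (p - xp)) := by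
  refine ⟨prox_ne_top f hproper lam p xp hxp, fun ε hε => ⟨2 * lam * ε, by positivity, ?_⟩⟩
  intro y hy
  by_cases hytop : f y = ⊤
  · rw [hytop]; exact le_top
  have h := prox_real_ineq f hproper lam p xp hxp y hytop
  rw [← EReal.coe_toReal (prox_ne_top f hproper lam p xp hxp) (hproper.1 xp),
    ← EReal.coe_toReal hytop (hproper.1 y), ← EReal.coe_add, EReal.coe_le_coe_iff]
  have hexp : ‖p - y‖ ^ 2 = ‖p - xp‖ ^ 2 - 2 * (inner ℝ (p - xp) (y - xp) : ℝ) + ‖y - xp‖ ^ 2 := by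
    have : p - y = (p - xp) - (y - xp) := by abel
    rw [this, norm_sub_sq_real]
  have hinner : (inner ℝ ((1 / lam) • (p - xp)) (y - xp) : ℝ)
      = (1 / lam) * (inner ℝ (p - xp) (y - xp) : ℝ) := real_inner_smul_left _ _ _
  rw [hinner]
  have hn : (0:ℝ) ≤ ‖y - xp‖ := norm_nonneg _
  have hl : (0:ℝ) < lam := hlam
  rw [hexp] at h
  have key : 1 / (2 * lam) * ‖y - xp‖ ^ 2 ≤ ε * ‖y - xp‖ := by
    rw [div_mul_eq_mul_div, one_mul, div_le_iff₀ (by positivity)]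
    nlinarith
  have h2 : (f xp).toReal + (1 / lam) * (inner ℝ (p - xp) (y - xp) : ℝ)
      - 1 / (2 * lam) * ‖y - xp‖ ^ 2 ≤ (f y).toReal := by
    have e1 : 1 / (2 * lam) * (‖p - xp‖ ^ 2 - 2 * (inner ℝ (p - xp) (y - xp) : ℝ) + ‖y - xp‖ ^ 2)
        = 1 / (2 * lam) * ‖p - xp‖ ^ 2 - (1/lam) * (inner ℝ (p - xp) (y - xp) : ℝ)
          + 1 / (2 * lam) * ‖y - xp‖ ^ 2 := by
      field_simp
    linarith [h, e1.symm.le]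
  linarith

lemma frb_arith (q L F1 F2 g1 g2 na nb nm ia ie im : ℝ)
    (hL : 0 ≤ L) (hLq : L < q)
    (h1 : F2 + 2 * q * (nm ^ 2 - 2 * im + na ^ 2) ≤ F1 + 2 * q * nm ^ 2)
    (h3 : 4 * q * im = ie - 2 * ia)
    (h4 : g2 ≤ g1 + ia + L / 2 * na ^ 2)
    (h5 : ie - ia ≤ L * nb * na) :
    F2 + g2 + q * na ^ 2 + (q - L) * na ^ 2 ≤ F1 + g1 + q * nb ^ 2 := by
  nlinarith [mul_nonneg hL (sq_nonneg (na - nb)),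
    mul_nonneg (by linarith : (0:ℝ) ≤ q - L / 2) (sq_nonneg nb)]

open Filter Topology

noncomputable section

variable {n : ℕ}

set_option maxHeartbeats 1000000 in
theorem frb_subsequential_convergence
    (f : EuclideanSpace ℝ (Fin n) → EReal)
    (hproper : ProperFn f) (hlsc : LowerSemicontinuous f)
    (lf : ℝ) (hlf : 0 < lf) (hpb : ProxBddWith f lf)
    (g : EuclideanSpace ℝ (Fin n) → ℝ)
    (g' : EuclideanSpace ℝ (Fin n) → EuclideanSpace ℝ (Fin n))
    (hdiff : ∀ x, HasGradientAt g (g' x) x)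
    (L : ℝ) (hL : 0 < L) (hlip : ∀ x y, ‖g' x - g' y‖ ≤ L * ‖x - y‖)
    (lam : ℝ) (hlam0 : 0 < lam) (hlam1 : lam < 1 / (4 * L)) (hlam2 : lam < lf)
    (hinf : ∃ b : ℝ, ∀ x, (b : EReal) ≤ f x + (g x : EReal))
    (x : ℕ → EuclideanSpace ℝ (Fin n))
    (hscheme : ∀ k : ℕ, 1 ≤ k →
      x (k + 1) ∈ Prox lam f
        (x k + lam • (g' (x (k - 1)) - g' (x k)) - lam • g' (x k)))
    (z : ℕ → WithLp 2 (EuclideanSpace ℝ (Fin n) × EuclideanSpace ℝ (Fin n)))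
    (hz : ∀ k, z k = (WithLp.equiv 2 _).symm (x (k + 1), x k))
    (Hf : WithLp 2 (EuclideanSpace ℝ (Fin n) × EuclideanSpace ℝ (Fin n)) → EReal)
    (hH : ∀ p, Hf p =
      f ((WithLp.equiv 2 _ p).1) +
        ((g ((WithLp.equiv 2 _ p).1) +
          1 / (4 * lam) * ‖(WithLp.equiv 2 _ p).1 - (WithLp.equiv 2 _ p).2‖ ^ 2 : ℝ) : EReal))
    (hbdd : Bornology.IsBounded (Set.range z))
    (φ : ℕ → ℕ) (hφ : StrictMono φ)
    (xstar ystar : EuclideanSpace ℝ (Fin n))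
    (hsub : Tendsto (fun l => z (φ l)) atTop
      (nhds ((WithLp.equiv 2 _).symm (xstar, ystar)))) :
    xstar = ystar ∧
    Tendsto (fun k => Hf (z k)) atTop (nhds (f xstar + ((g xstar : ℝ) : EReal))) ∧
    (∃ s, LSubd f xstar s ∧ s + g' xstar = 0) := by
  classical
  obtain ⟨b₀, hb₀⟩ := hinf
  have hbot : ∀ y, f y ≠ ⊥ := hproper.1
  have hlamne : lam ≠ 0 := ne_of_gt hlam0
  set q : ℝ := 1 / (4 * lam) with hq
  have hq0 : (0:ℝ) < q := by rw [hq]; positivity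
  have hLq : L < q := by
    rw [hq, lt_div_iff₀ (by positivity)]
    have h := (lt_div_iff₀ (by positivity : (0:ℝ) < 4 * L)).1 hlam1
    nlinarith [h]
  set P : ℕ → EuclideanSpace ℝ (Fin n) :=
    fun k => x k + lam • (g' (x (k - 1)) - g' (x k)) - lam • g' (x k) with hPdef
  have hprox : ∀ k, 1 ≤ k → x (k + 1) ∈ Prox lam f (P k) := fun k hk => hscheme k hk
  have hfin : ∀ k, 1 ≤ k → f (x (k + 1)) ≠ ⊤ := fun k hk =>
    prox_ne_top f hproper lam _ _ (hprox k hk)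
  set F : ℕ → ℝ := fun k => (f (x k)).toReal with hFdef
  have hFcoe : ∀ k, 1 ≤ k → f (x (k + 1)) = ((F (k + 1) : ℝ) : EReal) := fun k hk =>
    (EReal.coe_toReal (hfin k hk) (hbot _)).symm
  set Φ : ℕ → ℝ := fun k => F (k + 1) + g (x (k + 1)) + q * ‖x (k + 1) - x k‖ ^ 2 with hΦdef
  have hcq : (1:ℝ) / (2 * lam) = 2 * q := by rw [hq]; field_simp; ring
  have hql : 4 * q * lam = 1 := by rw [hq]; field_simp
  have hgc : Continuous g := by
    rw [continuous_iff_continuousAt]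
    exact fun y => (hdiff y).hasFDerivAt.continuousAt
  have hg'lim : ∀ (u : ℕ → EuclideanSpace ℝ (Fin n)) (a : EuclideanSpace ℝ (Fin n)),
      Tendsto u atTop (nhds a) → Tendsto (fun l => g' (u l)) atTop (nhds (g' a)) := by
    intro u a hu
    rw [tendsto_iff_norm_sub_tendsto_zero] at hu ⊢
    refine tendsto_of_tendsto_of_tendsto_of_le_of_le tendsto_const_nhds
      (by simpa using hu.const_mul L) (fun l => norm_nonneg _) (fun l => hlip _ _)
  -- key sufficient decrease inequality
  have hdesc : ∀ k, 1 ≤ k →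
      Φ (k + 1) + (q - L) * ‖x (k + 2) - x (k + 1)‖ ^ 2 ≤ Φ k := by
    intro k hk
    set a : EuclideanSpace ℝ (Fin n) := x (k + 2) - x (k + 1) with ha
    set bv : EuclideanSpace ℝ (Fin n) := x (k + 1) - x k with hbv
    set m : EuclideanSpace ℝ (Fin n) := P (k + 1) - x (k + 1) with hm
    have hmval : m = lam • (g' (x k) - g' (x (k + 1))) - lam • g' (x (k + 1)) := by
      rw [hm, hPdef]; simp only [Nat.add_sub_cancel]; abel
    have h1 := prox_real_ineq f hproper lam (P (k + 1)) (x (k + 2))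
      (hprox (k + 1) (by omega)) (x (k + 1)) (hfin k hk)
    rw [hcq] at h1
    have hma : P (k + 1) - x (k + 2) = m - a := by rw [hm, ha]; abel
    rw [hma] at h1
    have hmm : P (k + 1) - x (k + 1) = m := rfl
    rw [hmm] at h1
    have h2 : ‖m - a‖ ^ 2 = ‖m‖ ^ 2 - 2 * (inner ℝ m a : ℝ) + ‖a‖ ^ 2 := norm_sub_sq_real m a
    rw [h2] at h1
    have h3 : (inner ℝ m a : ℝ)
        = lam * ((inner ℝ (g' (x k)) a : ℝ) - 2 * (inner ℝ (g' (x (k + 1))) a : ℝ)) := by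
      rw [hmval, inner_sub_left, real_inner_smul_left, real_inner_smul_left, inner_sub_left]
      ring
    have h3' : 4 * q * (inner ℝ m a : ℝ)
        = (inner ℝ (g' (x k)) a : ℝ) - 2 * (inner ℝ (g' (x (k + 1))) a : ℝ) := by
      rw [h3]
      linear_combination ((inner ℝ (g' (x k)) a : ℝ) - 2 * (inner ℝ (g' (x (k + 1))) a : ℝ)) * hql
    have h4 : g (x (k + 2)) ≤ g (x (k + 1)) + (inner ℝ (g' (x (k + 1))) a : ℝ)
        + L / 2 * ‖a‖ ^ 2 := by
      have h := descent_aux g g' hdiff L hL.le hlip (x (k + 1)) (x (k + 2))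
      rw [← ha] at h; exact h
    have h5b : ‖g' (x k) - g' (x (k + 1))‖ ≤ L * ‖bv‖ := by
      have h := hlip (x k) (x (k + 1))
      rw [norm_sub_rev (x k) (x (k + 1)), ← hbv] at h
      exact h
    have h5 : (inner ℝ (g' (x k)) a : ℝ) - (inner ℝ (g' (x (k + 1))) a : ℝ) ≤ L * ‖bv‖ * ‖a‖ := by
      rw [← inner_sub_left]
      calc (inner ℝ (g' (x k) - g' (x (k + 1))) a : ℝ)
          ≤ ‖g' (x k) - g' (x (k + 1))‖ * ‖a‖ := real_inner_le_norm _ _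
        _ ≤ L * ‖bv‖ * ‖a‖ := mul_le_mul_of_nonneg_right h5b (norm_nonneg _)
    have goal' : F (k + 2) + g (x (k + 2)) + q * ‖a‖ ^ 2 + (q - L) * ‖a‖ ^ 2
        ≤ F (k + 1) + g (x (k + 1)) + q * ‖bv‖ ^ 2 :=
      frb_arith q L (F (k + 1)) (F (k + 2)) (g (x (k + 1))) (g (x (k + 2))) ‖a‖ ‖bv‖ ‖m‖
        (inner ℝ (g' (x (k + 1))) a : ℝ) (inner ℝ (g' (x k)) a : ℝ) (inner ℝ m a : ℝ)
        hL.le hLq h1 h3' h4 h5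
    show F (k + 1 + 1) + g (x (k + 1 + 1)) + q * ‖x (k + 1 + 1) - x (k + 1)‖ ^ 2
        + (q - L) * ‖x (k + 2) - x (k + 1)‖ ^ 2
        ≤ F (k + 1) + g (x (k + 1)) + q * ‖x (k + 1) - x k‖ ^ 2
    rw [← ha, ← hbv]
    exact goal'
  have hmono1 : ∀ k, 1 ≤ k → Φ (k + 1) ≤ Φ k := by
    intro k hk
    have h := hdesc k hk
    have h0 : 0 ≤ (q - L) * ‖x (k + 2) - x (k + 1)‖ ^ 2 :=
      mul_nonneg (by linarith) (sq_nonneg _)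
    linarith
  have hmonoΦ1 : ∀ k, 1 ≤ k → Φ k ≤ Φ 1 := by
    intro k hk
    induction k, hk using Nat.le_induction with
    | base => exact le_refl _
    | succ k hk ih => exact le_trans (hmono1 k hk) ih
  have hlow : ∀ k, b₀ ≤ Φ (k + 1) := by
    intro k
    have h := hb₀ (x (k + 2))
    rw [hFcoe (k + 1) (by omega), ← EReal.coe_add, EReal.coe_le_coe_iff] at h
    have hnn : 0 ≤ q * ‖x (k + 1 + 1) - x (k + 1)‖ ^ 2 := by positivity
    show b₀ ≤ F (k + 1 + 1) + g (x (k + 1 + 1)) + q * ‖x (k + 1 + 1) - x (k + 1)‖ ^ 2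
    have e : k + 1 + 1 = k + 2 := rfl
    rw [e] at hnn ⊢
    linarith
  set ψ : ℕ → ℝ := fun k => Φ (k + 1) with hψdef
  have hanti : Antitone ψ := antitone_nat_of_succ_le fun k => hmono1 (k + 1) (by omega)
  have hbdl : BddBelow (Set.range ψ) := ⟨b₀, by rintro r ⟨k, rfl⟩; exact hlow k⟩
  set A : ℝ := ⨅ i, ψ i with hAdef
  have hψconv : Tendsto ψ atTop (nhds A) := tendsto_atTop_ciInf hanti hbdl
  -- differences go to zero
  have hsq0 : Tendsto (fun k => ‖x (k + 1) - x k‖) atTop (nhds 0) := by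
    have h1 : Tendsto (fun k => ψ k - ψ (k + 1)) atTop (nhds 0) := by
      have h2 : Tendsto (fun k => ψ (k + 1)) atTop (nhds A) :=
        hψconv.comp (tendsto_add_atTop_nat 1)
      simpa using hψconv.sub h2
    have h3 : Tendsto (fun k => (q - L) * ‖x (k + 3) - x (k + 2)‖ ^ 2) atTop (nhds 0) := by
      refine tendsto_of_tendsto_of_tendsto_of_le_of_le tendsto_const_nhds h1
        (fun k => mul_nonneg (by linarith) (sq_nonneg _)) (fun k => ?_)
      have h := hdesc (k + 1) (by omega)
      have e1 : ψ k = Φ (k + 1) := rfl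
      have e2 : ψ (k + 1) = Φ (k + 1 + 1) := rfl
      have e3 : k + 1 + 2 = k + 3 := rfl
      rw [e1, e2]
      rw [e3] at h
      linarith
    have h4 : Tendsto (fun k => ‖x (k + 3) - x (k + 2)‖ ^ 2) atTop (nhds 0) := by
      have h5 := h3.const_mul (1 / (q - L))
      have e : ∀ k, 1 / (q - L) * ((q - L) * ‖x (k + 3) - x (k + 2)‖ ^ 2)
          = ‖x (k + 3) - x (k + 2)‖ ^ 2 := by
        intro k
        have : q - L ≠ 0 := by linarith
        field_simp
      simp only [mul_zero] at h5
      exact h5.congr e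
    have h6 : Tendsto (fun k => ‖x (k + 3) - x (k + 2)‖) atTop (nhds 0) := by
      have h7 := (Real.continuous_sqrt.tendsto 0).comp h4
      have e : ∀ k, Real.sqrt (‖x (k + 3) - x (k + 2)‖ ^ 2) = ‖x (k + 3) - x (k + 2)‖ :=
        fun k => Real.sqrt_sq (norm_nonneg _)
      simp only [Real.sqrt_zero] at h7
      exact h7.congr e
    rw [← tendsto_add_atTop_iff_nat 2]
    exact h6
  have hdiffvec : Tendsto (fun k => x (k + 1) - x k) atTop (nhds 0) := by
    rw [tendsto_iff_norm_sub_tendsto_zero]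
    simpa using hsq0
  -- component convergence of the subsequence
  have hφtop : Tendsto φ atTop atTop := hφ.tendsto_atTop
  have hφge : ∀ l, l ≤ φ l := fun l => hφ.le_apply
  have hφ1top : Tendsto (fun l => φ l - 1) atTop atTop := by
    rw [tendsto_atTop_atTop]
    exact fun b => ⟨b + 1, fun a ha => by have := hφge a; omega⟩
  set zs : WithLp 2 (EuclideanSpace ℝ (Fin n) × EuclideanSpace ℝ (Fin n)) :=
    (WithLp.equiv 2 _).symm (xstar, ystar) with hzs
  have hznorm : Tendsto (fun l => ‖z (φ l) - zs‖) atTop (nhds 0) := by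
    rw [← tendsto_iff_norm_sub_tendsto_zero]
    exact hsub
  have hcomp1 : ∀ l, (z (φ l) - zs).fst = x (φ l + 1) - xstar := by
    intro l; rw [hz]; rfl
  have hcomp2 : ∀ l, (z (φ l) - zs).snd = x (φ l) - ystar := by
    intro l; rw [hz]; rfl
  have hfst : Tendsto (fun l => x (φ l + 1)) atTop (nhds xstar) := by
    rw [tendsto_iff_norm_sub_tendsto_zero]
    refine tendsto_of_tendsto_of_tendsto_of_le_of_le tendsto_const_nhds hznorm
      (fun l => norm_nonneg _) (fun l => ?_)
    have h := WithLp.prod_norm_sq_eq_of_L2 (z (φ l) - zs)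
    rw [hcomp1 l] at h
    nlinarith [norm_nonneg (x (φ l + 1) - xstar), norm_nonneg (z (φ l) - zs),
      sq_nonneg ‖(z (φ l) - zs).snd‖]
  have hsnd : Tendsto (fun l => x (φ l)) atTop (nhds ystar) := by
    rw [tendsto_iff_norm_sub_tendsto_zero]
    refine tendsto_of_tendsto_of_tendsto_of_le_of_le tendsto_const_nhds hznorm
      (fun l => norm_nonneg _) (fun l => ?_)
    have h := WithLp.prod_norm_sq_eq_of_L2 (z (φ l) - zs)
    rw [hcomp2 l] at h
    nlinarith [norm_nonneg (x (φ l) - ystar), norm_nonneg (z (φ l) - zs),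
      sq_nonneg ‖(z (φ l) - zs).fst‖]
  -- x* = y*
  have hxy : xstar = ystar := by
    have h1 : Tendsto (fun l => x (φ l + 1) - x (φ l)) atTop (nhds (xstar - ystar)) :=
      hfst.sub hsnd
    have h2 : Tendsto (fun l => x (φ l + 1) - x (φ l)) atTop (nhds 0) :=
      hdiffvec.comp hφtop
    exact sub_eq_zero.1 (tendsto_nhds_unique h1 h2)
  subst hxy
  have hprev : Tendsto (fun l => x (φ l - 1)) atTop (nhds xstar) := by
    have h2 : Tendsto (fun l => x (φ l - 1 + 1) - x (φ l - 1)) atTop (nhds 0) :=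
      hdiffvec.comp hφ1top
    have h3 : Tendsto (fun l => x (φ l - 1 + 1)) atTop (nhds xstar) := by
      refine hsnd.congr' ?_
      filter_upwards [eventually_ge_atTop (1 : ℕ)] with l hl
      have h := hφge l
      have e : φ l - 1 + 1 = φ l := by omega
      rw [e]
    have h4 := h3.sub h2
    have e : ∀ l, x (φ l - 1 + 1) - (x (φ l - 1 + 1) - x (φ l - 1)) = x (φ l - 1) :=
      fun l => sub_sub_cancel _ _
    simp only [sub_zero] at h4
    exact h4.congr e
  have hPlim : Tendsto (fun l => P (φ l)) atTop (nhds (xstar - lam • g' xstar)) := by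
    have h1 : Tendsto (fun l => x (φ l) + lam • (g' (x (φ l - 1)) - g' (x (φ l)))
        - lam • g' (x (φ l))) atTop
        (nhds (xstar + lam • (g' xstar - g' xstar) - lam • g' xstar)) :=
      (hsnd.add (((hg'lim _ _ hprev).sub (hg'lim _ _ hsnd)).const_smul lam)).sub
        ((hg'lim _ _ hsnd).const_smul lam)
    simpa [sub_self, smul_zero, add_zero] using h1
  have hnφ : Tendsto (fun l => ‖x (φ l + 1) - x (φ l)‖) atTop (nhds 0) := hsq0.comp hφtop
  have hgφ : Tendsto (fun l => g (x (φ l + 1))) atTop (nhds (g xstar)) :=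
    (hgc.tendsto xstar).comp hfst
  -- f x* is finite
  have hftop : f xstar ≠ ⊤ := by
    intro htop
    have hev1 : ∀ᶠ y in nhds xstar, ((Φ 1 - g xstar + 1 : ℝ) : EReal) < f y := by
      apply hlsc xstar
      rw [htop]; exact EReal.coe_lt_top _
    have hev2 := hfst.eventually hev1
    have hgt : ∀ᶠ y in nhds (g xstar), g xstar - 1 < y :=
      eventually_gt_nhds (by linarith)
    have hev3 : ∀ᶠ l in atTop, g xstar - 1 < g (x (φ l + 1)) :=
      hgφ.eventually hgt
    have hfinal : ∀ᶠ _l in (atTop : Filter ℕ), False := by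
      filter_upwards [hev2, hev3, eventually_ge_atTop (1 : ℕ)] with l h1 h2 h3
      have hφl1 : 1 ≤ φ l := le_trans h3 (hφge l)
      rw [hFcoe (φ l) hφl1, EReal.coe_lt_coe_iff] at h1
      have h4 : F (φ l + 1) + g (x (φ l + 1)) ≤ Φ (φ l) := by
        have hnn : 0 ≤ q * ‖x (φ l + 1) - x (φ l)‖ ^ 2 := by positivity
        show _ ≤ F (φ l + 1) + g (x (φ l + 1)) + q * ‖x (φ l + 1) - x (φ l)‖ ^ 2
        linarith
      have h5 : Φ (φ l) ≤ Φ 1 := hmonoΦ1 (φ l) hφl1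
      linarith
    exact hfinal.exists.elim fun _ h => h
  set B : ℝ := (f xstar).toReal with hBdef
  have hBcoe : f xstar = ((B : ℝ) : EReal) := (EReal.coe_toReal hftop (hbot _)).symm
  -- f-values converge along the subsequence
  have hFlim : Tendsto (fun l => F (φ l + 1)) atTop (nhds B) := by
    rw [tendsto_order]
    constructor
    · intro a ha
      have ha' : ((a : ℝ) : EReal) < f xstar := by
        rw [hBcoe, EReal.coe_lt_coe_iff]; exact ha
      have hev := hfst.eventually (hlsc xstar a ha')
      filter_upwards [hev, eventually_ge_atTop (1 : ℕ)] with l h1 h2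
      have hφl1 : 1 ≤ φ l := le_trans h2 (hφge l)
      rw [hFcoe (φ l) hφl1, gt_iff_lt, EReal.coe_lt_coe_iff] at h1
      exact h1
    · intro bb hb
      have t1 : Tendsto (fun l => P (φ l) - xstar) atTop (nhds (-(lam • g' xstar))) := by
        have h := hPlim.sub (tendsto_const_nhds : Tendsto (fun _ : ℕ => xstar) atTop (nhds xstar))
        simpa [sub_sub_cancel_left] using h
      have t2 : Tendsto (fun l => P (φ l) - x (φ l + 1)) atTop (nhds (-(lam • g' xstar))) := by
        have h := hPlim.sub hfst
        simpa [sub_sub_cancel_left] using h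
      have hRlim : Tendsto (fun l => B + 1 / (2 * lam) * ‖P (φ l) - xstar‖ ^ 2
          - 1 / (2 * lam) * ‖P (φ l) - x (φ l + 1)‖ ^ 2) atTop (nhds B) := by
        have h1 := ((tendsto_const_nhds : Tendsto (fun _ : ℕ => B) atTop (nhds B)).add
            ((((continuous_norm.tendsto _).comp t1).pow 2).const_mul (1 / (2 * lam)))).sub
            ((((continuous_norm.tendsto _).comp t2).pow 2).const_mul (1 / (2 * lam)))
        simpa using h1
      have hevR := hRlim.eventually (eventually_lt_nhds hb)
      filter_upwards [hevR, eventually_ge_atTop (1 : ℕ)] with l h1 h2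
      have hφl1 : 1 ≤ φ l := le_trans h2 (hφge l)
      have hpr := prox_real_ineq f hproper lam (P (φ l)) (x (φ l + 1))
        (hprox (φ l) hφl1) xstar hftop
      have e1 : (f (x (φ l + 1))).toReal = F (φ l + 1) := rfl
      have e2 : (f xstar).toReal = B := rfl
      rw [e1, e2] at hpr
      linarith
  -- identify the limit of Φ
  have hA : A = B + g xstar := by
    have hψφ : Tendsto (fun l => Φ (φ l)) atTop (nhds A) := by
      refine (hψconv.comp hφ1top).congr' ?_
      filter_upwards [eventually_ge_atTop (1 : ℕ)] with l hl
      have h := hφge l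
      show ψ (φ l - 1) = Φ (φ l)
      have e : φ l - 1 + 1 = φ l := by omega
      show Φ (φ l - 1 + 1) = Φ (φ l)
      rw [e]
    have hΦφ : Tendsto (fun l => Φ (φ l)) atTop (nhds (B + g xstar + q * 0 ^ 2)) :=
      (hFlim.add hgφ).add ((hnφ.pow 2).const_mul q)
    have h := tendsto_nhds_unique hψφ hΦφ
    simpa using h
  refine ⟨rfl, ?_, ?_⟩
  · -- convergence of H-values
    have hΦlim : Tendsto Φ atTop (nhds (B + g xstar)) := by
      rw [← tendsto_add_atTop_iff_nat 1, ← hA]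
      exact hψconv
    have hHfΦ : (fun k => ((Φ k : ℝ) : EReal)) =ᶠ[atTop] fun k => Hf (z k) := by
      filter_upwards [eventually_ge_atTop (1 : ℕ)] with k hk
      rw [hH, hz]
      simp only [Equiv.apply_symm_apply]
      rw [hFcoe k hk, ← EReal.coe_add]
      norm_cast
      show Φ k = F (k + 1) + (g (x (k + 1)) + q * ‖x (k + 1) - x k‖ ^ 2)
      rw [hΦdef]; ring
    have h1 : Tendsto (fun k => ((Φ k : ℝ) : EReal)) atTop (nhds ((B + g xstar : ℝ) : EReal)) :=
      EReal.tendsto_coe.2 hΦlim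
    have h2 := h1.congr' hHfΦ
    rw [hBcoe, ← EReal.coe_add]
    exact h2
  · -- stationarity
    refine ⟨-g' xstar, ?_, neg_add_cancel _⟩
    refine ⟨fun l => x (φ (l + 1) + 1),
      fun l => (1 / lam) • (P (φ (l + 1)) - x (φ (l + 1) + 1)), ?_, ?_, ?_, ?_⟩
    · exact hfst.comp (tendsto_add_atTop_nat 1)
    · have h1 : Tendsto (fun l => F (φ (l + 1) + 1)) atTop (nhds B) :=
        hFlim.comp (tendsto_add_atTop_nat 1)
      have h2 := EReal.tendsto_coe.2 h1
      have h3 : ∀ l, f (x (φ (l + 1) + 1)) = ((F (φ (l + 1) + 1) : ℝ) : EReal) :=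
        fun l => hFcoe (φ (l + 1)) (le_trans (by omega) (hφge (l + 1)))
      rw [hBcoe]
      exact h2.congr fun l => (h3 l).symm
    · intro l
      exact prox_fsubd f hproper lam hlam0 _ _
        (hprox (φ (l + 1)) (le_trans (by omega) (hφge (l + 1))))
    · have hPx : Tendsto (fun l => P (φ l) - x (φ l + 1)) atTop (nhds (-(lam • g' xstar))) := by
        have h := hPlim.sub hfst
        simpa [sub_sub_cancel_left] using h
      have h4 := (hPx.comp (tendsto_add_atTop_nat 1)).const_smul (1 / lam)
      have h5 : (1 / lam) • (-(lam • g' xstar)) = -g' xstar := by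
        rw [smul_neg, smul_smul, one_div_mul_cancel hlamne, one_smul]
      rw [h5] at h4
      exact h4
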